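/- Let G be a nontrivial finite abelian group with Davenport-type constant d(G), meaning: for all n > d(G) and all g_1,…,g_n ∈ G, the equation Σ x_i g_i = 0 has a solution x ∈ {0,1}^n with x ≠ 0. Then for any g_1,…,g_n ∈ G, the number of x ∈ {0,1}^n with Σ_{i=1}^n x_i g_i = 0 is at least 2^n / Σ_{k=0}^{d(G)} C(n,k), which is at least 2^{n − (d(G)+1)·log₂ n} when n ≥ 2. -/

import Mathlib

open Finset

section Aux

variable {G : Type*} [AddCommGroup G]

private lemma fin2_val_cases (a : Fin 2) : (a : ℕ) = 0 ∨ (a : ℕ) = 1 := by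
  have := a.isLt; omega

private lemma fin2_eq_one_iff (a : Fin 2) : a = 1 ↔ (a : ℕ) = 1 := by
  constructor
  · intro h; rw [h]; rfl
  · intro h; exact Fin.ext (by simpa using h)

private lemma sum_fin2_smul {N : ℕ} [DecidableEq (Fin N)] (x : Fin N → Fin 2) (h : Fin N → G) :
    ∑ i, ((x i : ℕ) • h i) = ∑ i ∈ univ.filter (fun i => x i = 1), h i := by
  rw [Finset.sum_filter]
  refine Finset.sum_congr rfl fun i _ => ?_
  rcases fin2_val_cases (x i) with h2 | h2
  · have hne : ¬ (x i = 1) := by rw [fin2_eq_one_iff]; omega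
    simp [hne, h2]
  · have heq : x i = 1 := (fin2_eq_one_iff (x i)).mpr h2
    simp [heq, h2]

private lemma reduce {n : ℕ} (d : ℕ) (g : Fin n → G)
    (hd : ∀ N, N > d → ∀ g : Fin N → G, ∃ x : Fin N → Fin 2, x ≠ 0 ∧
      ∑ i, ((x i : ℕ) • g i) = 0) :
    ∀ (m : ℕ) (A : Finset (Fin n)), A.card ≤ m →
      ∃ B, B ⊆ A ∧ B.card ≤ d ∧ ∑ i ∈ B, g i = ∑ i ∈ A, g i := by
  intro m
  induction m with
  | zero =>
    intro A hA
    exact ⟨A, Finset.Subset.refl A, by omega, rfl⟩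
  | succ m ih =>
    intro A hA
    by_cases hcard : A.card ≤ d
    · exact ⟨A, Finset.Subset.refl A, hcard, rfl⟩
    · push_neg at hcard
      obtain ⟨x, hx0, hxsum⟩ := hd A.card hcard (fun i => g (A.orderIsoOfFin rfl i))
      set e := A.orderIsoOfFin rfl with he
      have hsum2 : ∑ i ∈ univ.filter (fun i => x i = 1), g ((e i : Fin n)) = 0 := by
        rw [← sum_fin2_smul]; exact hxsum
      set T : Finset (Fin n) := (univ.filter (fun i => x i = 1)).image
        (fun i => ((e i : {a // a ∈ A}) : Fin n)) with hT
      have hTA : T ⊆ A := by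
        intro a ha
        simp only [hT, Finset.mem_image] at ha
        obtain ⟨i, _, hi⟩ := ha
        rw [← hi]; exact (e i).2
      have hTsum : ∑ i ∈ T, g i = 0 := by
        rw [hT, Finset.sum_image]
        · exact hsum2
        · intro a _ b _ hab
          exact e.injective (Subtype.ext hab)
      have hTne : T.Nonempty := by
        obtain ⟨i, hi⟩ := Function.ne_iff.mp hx0
        have hval : (x i : ℕ) ≠ 0 := by
          intro h; exact hi (Fin.ext (by simpa using h))
        have : x i = 1 := (fin2_eq_one_iff (x i)).mpr (by
          rcases fin2_val_cases (x i) with h | h <;> omega)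
        exact ⟨((e i : {a // a ∈ A}) : Fin n),
          Finset.mem_image_of_mem _ (by simp [this])⟩
      have hA' : (A \ T).card ≤ m := by
        have h1 : (A \ T).card = A.card - T.card := Finset.card_sdiff_of_subset hTA
        have h2 : 0 < T.card := Finset.card_pos.mpr hTne
        omega
      obtain ⟨B, hBA', hBd, hBsum⟩ := ih (A \ T) hA'
      refine ⟨B, hBA'.trans Finset.sdiff_subset, hBd, ?_⟩
      rw [hBsum]
      have hsd := Finset.sum_sdiff (f := g) hTA
      rw [← hsd, hTsum, add_zero]

private lemma geom_bound {n : ℕ} (hn : 2 ≤ n) :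
    ∀ d : ℕ, ∑ k ∈ Finset.range (d + 1), n ^ k ≤ n ^ (d + 1) := by
  intro d
  induction d with
  | zero => simp; omega
  | succ d ih =>
    rw [Finset.sum_range_succ]
    calc ∑ k ∈ Finset.range (d + 1), n ^ k + n ^ (d + 1)
        ≤ n ^ (d + 1) + n ^ (d + 1) := by omega
      _ = 2 * n ^ (d + 1) := by ring
      _ ≤ n * n ^ (d + 1) := Nat.mul_le_mul_right _ hn
      _ = n ^ (d + 2) := by ring

end Aux

theorem davenport_solution_count (G : Type*) [AddCommGroup G] [Fintype G] [Nontrivial G] [DecidableEq G]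
    (d : ℕ)
    (hd : ∀ N, N > d → ∀ g : Fin N → G, ∃ x : Fin N → Fin 2, x ≠ 0 ∧
      ∑ i, ((x i : ℕ) • g i) = 0)
    (n : ℕ) (g : Fin n → G) :
    ((Finset.univ.filter fun x : Fin n → Fin 2 =>
        ∑ i, ((x i : ℕ) • g i) = 0).card : ℝ)
      ≥ 2 ^ n / ∑ k ∈ Finset.range (d + 1), (n.choose k : ℝ) ∧
    (2 ≤ n → (2 : ℝ) ^ n / ∑ k ∈ Finset.range (d + 1), (n.choose k : ℝ)
      ≥ (2 : ℝ) ^ ((n : ℝ) - (d + 1) * Real.logb 2 n)) := by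
  have Spos : (0 : ℝ) < ∑ k ∈ Finset.range (d + 1), (n.choose k : ℝ) := by
    have h0 : (0 : ℕ) ∈ Finset.range (d + 1) := by simp
    have h1 : (1 : ℝ) ≤ ∑ k ∈ Finset.range (d + 1), (n.choose k : ℝ) := by
      have := Finset.single_le_sum (f := fun k => (n.choose k : ℝ))
        (fun k _ => by positivity) h0
      simpa using this
    linarith
  constructor
  · -- main counting bound
    set Sf := Finset.univ.filter (fun A : Finset (Fin n) => ∑ i ∈ A, g i = 0) with hSf
    set Wf := Finset.univ.filter (fun C : Finset (Fin n) => C.card ≤ d) with hWf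
    have hred : ∀ A : Finset (Fin n), ∃ B, B ⊆ A ∧ B.card ≤ d ∧
        ∑ i ∈ B, g i = ∑ i ∈ A, g i :=
      fun A => reduce d g hd A.card A le_rfl
    choose B hB1 hB2 hB3 using hred
    -- injection univ → Sf ×ˢ Wf
    have hcount : (Finset.univ : Finset (Finset (Fin n))).card ≤ Sf.card * Wf.card := by
      rw [← Finset.card_product]
      apply Finset.card_le_card_of_injOn (fun A => (A \ B A, B A))
      · intro A _
        simp only [Finset.mem_coe]
        rw [Finset.mem_product]
        constructor
        · rw [hSf, Finset.mem_filter]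
          refine ⟨Finset.mem_univ _, ?_⟩
          have : ∑ i ∈ A \ B A, g i = ∑ i ∈ A, g i - ∑ i ∈ B A, g i := by
            rw [eq_sub_iff_add_eq, Finset.sum_sdiff (hB1 A)]
          rw [this, hB3 A, sub_self]
        · rw [hWf, Finset.mem_filter]
          exact ⟨Finset.mem_univ _, hB2 A⟩
      · intro A1 _ A2 _ heq
        have h1 : A1 \ B A1 = A2 \ B A2 := congrArg Prod.fst heq
        have h2 : B A1 = B A2 := congrArg Prod.snd heq
        have e1 : A1 = (A1 \ B A1) ∪ B A1 := (Finset.sdiff_union_of_subset (hB1 A1)).symm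
        have e2 : A2 = (A2 \ B A2) ∪ B A2 := (Finset.sdiff_union_of_subset (hB1 A2)).symm
        rw [e1, e2, h1, h2]
    have hWcard : Wf.card = ∑ k ∈ Finset.range (d + 1), n.choose k := by
      rw [Finset.card_eq_sum_card_fiberwise (f := Finset.card) (t := Finset.range (d + 1))
        (fun C hC => by rw [Finset.mem_coe, hWf, Finset.mem_filter] at hC; simp [Nat.lt_succ_iff, hC.2])]
      refine Finset.sum_congr rfl fun k hk => ?_
      rw [Finset.mem_range, Nat.lt_succ_iff] at hk
      have : Wf.filter (fun C => C.card = k) = Finset.powersetCard k Finset.univ := by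
        ext C
        simp only [hWf, Finset.mem_filter, Finset.mem_univ, true_and,
          Finset.mem_powersetCard, Finset.subset_univ]
        omega
      rw [show {a ∈ Wf | a.card = k} = Wf.filter (fun C => C.card = k) from rfl, this,
        Finset.card_powersetCard, Finset.card_univ, Fintype.card_fin]
    have huniv : (Finset.univ : Finset (Finset (Fin n))).card = 2 ^ n := by
      rw [Finset.card_univ, Fintype.card_finset, Fintype.card_fin]
    -- bijection between Fin 2 functions and finsets
    have hbij : (Finset.univ.filter fun x : Fin n → Fin 2 =>
        ∑ i, ((x i : ℕ) • g i) = 0).card = Sf.card := by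
      apply Finset.card_nbij' (fun x => Finset.univ.filter (fun i => x i = 1))
        (fun A => fun i => if i ∈ A then 1 else 0)
      · intro x hx
        simp only [Finset.mem_coe] at hx ⊢
        rw [Finset.mem_filter] at hx
        rw [hSf, Finset.mem_filter]
        exact ⟨Finset.mem_univ _, by rw [← sum_fin2_smul]; exact hx.2⟩
      · intro A hA
        simp only [Finset.mem_coe] at hA ⊢
        rw [hSf, Finset.mem_filter] at hA
        rw [Finset.mem_filter]
        refine ⟨Finset.mem_univ _, ?_⟩
        rw [sum_fin2_smul]
        have : Finset.univ.filter (fun i => (if i ∈ A then (1 : Fin 2) else 0) = 1) = A := by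
          ext i
          by_cases h : i ∈ A <;> simp [h]
        rw [this]; exact hA.2
      · intro x _
        funext i
        by_cases h : x i = 1
        · simp [h]
        · have : x i = 0 := by
            rcases fin2_val_cases (x i) with hv | hv
            · exact Fin.ext (by simpa using hv)
            · exact absurd ((fin2_eq_one_iff (x i)).mpr hv) h
          simp [h, this]
      · intro A _
        ext i
        by_cases h : i ∈ A <;> simp [h]
    rw [hbij, ge_iff_le, div_le_iff₀ Spos]
    have : ((2 : ℝ)) ^ n ≤ (Sf.card : ℝ) * (Wf.card : ℝ) := by
      have h := hcount
      rw [huniv] at h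
      exact_mod_cast h
    calc (2 : ℝ) ^ n ≤ (Sf.card : ℝ) * (Wf.card : ℝ) := this
      _ = (Sf.card : ℝ) * ∑ k ∈ Finset.range (d + 1), (n.choose k : ℝ) := by
        rw [hWcard]; push_cast; ring
  · -- second part
    intro hn
    have hnpos : (0 : ℝ) < n := by positivity
    have hS : ∑ k ∈ Finset.range (d + 1), (n.choose k : ℝ) ≤ (n : ℝ) ^ (d + 1) := by
      calc ∑ k ∈ Finset.range (d + 1), (n.choose k : ℝ)
          ≤ ∑ k ∈ Finset.range (d + 1), (n : ℝ) ^ k := by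
            refine Finset.sum_le_sum fun k _ => ?_
            exact_mod_cast Nat.choose_le_pow n k
        _ ≤ (n : ℝ) ^ (d + 1) := by exact_mod_cast geom_bound hn d
    have hrpow : (2 : ℝ) ^ ((n : ℝ) - (↑d + 1) * Real.logb 2 n)
        = (2 : ℝ) ^ n / (n : ℝ) ^ (d + 1) := by
      rw [Real.rpow_sub two_pos]
      congr 1
      · rw [Real.rpow_natCast]
      · rw [mul_comm, Real.rpow_mul (by norm_num : (0:ℝ) ≤ 2),
          Real.rpow_logb two_pos (by norm_num) hnpos]
        rw [← Real.rpow_natCast (n : ℝ) (d + 1)]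
        push_cast
        ring_nf
    rw [ge_iff_le, hrpow]
    apply div_le_div_of_nonneg_left (by positivity) Spos hS
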